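/- Let ℓ ≥ 0, ℏ ≠ 0, and let V, E, F, H, X, Y be the operators on the basis |A_1,A_2⟩ (0 ≤ A_1 ≤ A_2 ≤ A_1+2ℓ+1) defined previously. For each N with 0 ≤ N ≤ ℓ, the vector v_N = ∑_{j=0}^{N}(-1)^j · binomial(N,j) · ∏_{i=0}^{j-1} ((2ℓ+1-2i)(2ℓ+1-4(i+1)))/((2ℓ+1-2(N+i+1))(2ℓ+1-4i)) · |N-j, N+j⟩ satisfies Y v_N = 0. -/
import Mathlib


attribute [local instance] Classical.propDecidable

noncomputable section

/-- The coefficient field `ℂ(ℏ)`. -/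
abbrev Fh : Type := RatFunc ℂ

/-- The generator `ℏ` of `ℂ(ℏ)`. -/
def hb : Fh := RatFunc.X

/-- Admissibility of the index `(A₁, A₂)`: `0 ≤ A₁ ≤ A₂ ≤ A₁ + 2ℓ + 1`. -/
def Adm (ℓ : ℕ) (A : ℤ × ℤ) : Prop :=
  0 ≤ A.1 ∧ A.1 ≤ A.2 ∧ A.2 ≤ A.1 + (2 * ℓ + 1)

/-- The vector space `V` with basis `|A₁, A₂⟩` indexed by admissible pairs. -/
abbrev V (ℓ : ℕ) : Type := {A : ℤ × ℤ // Adm ℓ A} →₀ Fh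

/-- The basis vector `|A₁, A₂⟩`, with out-of-range indices giving `0`. -/
def ket (ℓ : ℕ) (A : ℤ × ℤ) : V ℓ :=
  if h : Adm ℓ A then Finsupp.single ⟨A, h⟩ 1 else 0

/-- `E |A₁,A₂⟩ = |A₁+1, A₂+1⟩`. -/
def opE (ℓ : ℕ) : V ℓ →ₗ[Fh] V ℓ :=
  Finsupp.lsum Fh fun A =>
    LinearMap.toSpanSingleton Fh (V ℓ) (ket ℓ (A.1.1 + 1, A.1.2 + 1))

/-- `F |A₁,A₂⟩ = A₁ ((2ℓ+1)/2 - A₂) ℏ² |A₁-1, A₂-1⟩`. -/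
def opF (ℓ : ℕ) : V ℓ →ₗ[Fh] V ℓ :=
  Finsupp.lsum Fh fun A =>
    LinearMap.toSpanSingleton Fh (V ℓ)
      (((((A.1.1 : ℚ) * ((2 * ℓ + 1) / 2 - (A.1.2 : ℚ)) : ℚ) : Fh) * hb ^ 2) •
        ket ℓ (A.1.1 - 1, A.1.2 - 1))

/-- `H |A₁,A₂⟩ = (A₁ + A₂ + 1 - (2ℓ+1)/2) ℏ |A₁, A₂⟩`. -/
def opH (ℓ : ℕ) : V ℓ →ₗ[Fh] V ℓ :=
  Finsupp.lsum Fh fun A =>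
    LinearMap.toSpanSingleton Fh (V ℓ)
      (((((A.1.1 : ℚ) + (A.1.2 : ℚ) + 1 - (2 * ℓ + 1) / 2 : ℚ) : Fh) * hb) •
        ket ℓ (A.1.1, A.1.2))

/-- `X |A₁,A₂⟩ = ((A₂-A₁-2ℓ-1)/(A₂-A₁-(2ℓ+1)/2)) |A₁,A₂+1⟩
              + ((A₂-A₁)/(A₂-A₁-(2ℓ+1)/2)) |A₁+1,A₂⟩`. -/
def opX (ℓ : ℕ) : V ℓ →ₗ[Fh] V ℓ :=
  Finsupp.lsum Fh fun A =>
    LinearMap.toSpanSingleton Fh (V ℓ)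
      (((((A.1.2 : ℚ) - (A.1.1 : ℚ) - (2 * ℓ + 1)) /
            ((A.1.2 : ℚ) - (A.1.1 : ℚ) - (2 * ℓ + 1) / 2) : ℚ) : Fh) •
          ket ℓ (A.1.1, A.1.2 + 1) +
        ((((A.1.2 : ℚ) - (A.1.1 : ℚ)) /
            ((A.1.2 : ℚ) - (A.1.1 : ℚ) - (2 * ℓ + 1) / 2) : ℚ) : Fh) •
          ket ℓ (A.1.1 + 1, A.1.2))

/-- `Y |A₁,A₂⟩ = ((A₂-A₁)((2ℓ+1)/2-A₂)ℏ/(A₂-A₁-(2ℓ+1)/2)) |A₁,A₂-1⟩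
              + (A₁(2ℓ+1-A₂+A₁)ℏ/(A₂-A₁-(2ℓ+1)/2)) |A₁-1,A₂⟩`. -/
def opY (ℓ : ℕ) : V ℓ →ₗ[Fh] V ℓ :=
  Finsupp.lsum Fh fun A =>
    LinearMap.toSpanSingleton Fh (V ℓ)
      ((((((A.1.2 : ℚ) - (A.1.1 : ℚ)) * ((2 * ℓ + 1) / 2 - (A.1.2 : ℚ)) /
            ((A.1.2 : ℚ) - (A.1.1 : ℚ) - (2 * ℓ + 1) / 2) : ℚ) : Fh) * hb) •
          ket ℓ (A.1.1, A.1.2 - 1) +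
        (((((A.1.1 : ℚ) * (2 * ℓ + 1 - (A.1.2 : ℚ) + (A.1.1 : ℚ))) /
            ((A.1.2 : ℚ) - (A.1.1 : ℚ) - (2 * ℓ + 1) / 2) : ℚ) : Fh) * hb) •
          ket ℓ (A.1.1 - 1, A.1.2))

lemma odd_ne_even (ℓ : ℕ) (z : ℤ) : (2*(ℓ:ℚ)+1) ≠ 2*(z:ℚ) := by
  intro h
  have h2 : ((2*(ℓ:ℤ)+1 : ℤ):ℚ) = ((2*z:ℤ):ℚ) := by push_cast; linarith
  have := Int.cast_injective (α := ℚ) h2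
  omega

lemma key_q (ℓ N j : ℕ) (hN : N ≤ ℓ) (hj : j < N) :
    (-1 : ℚ) ^ (j+1) * (N.choose (j+1) : ℚ) *
      (∏ i ∈ Finset.range (j+1),
        ((2 * (ℓ : ℚ) + 1 - 2 * i) * (2 * (ℓ : ℚ) + 1 - 4 * ((i : ℚ) + 1))) /
          ((2 * (ℓ : ℚ) + 1 - 2 * ((N : ℚ) + (i : ℚ) + 1)) *
            (2 * (ℓ : ℚ) + 1 - 4 * i))) *
      ((((N:ℚ)+((j:ℚ)+1)) - ((N:ℚ)-((j:ℚ)+1))) * ((2*(ℓ:ℚ)+1)/2 - ((N:ℚ)+((j:ℚ)+1))) /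
        (((N:ℚ)+((j:ℚ)+1)) - ((N:ℚ)-((j:ℚ)+1)) - (2*(ℓ:ℚ)+1)/2))
    + (-1 : ℚ) ^ j * (N.choose j : ℚ) *
      (∏ i ∈ Finset.range j,
        ((2 * (ℓ : ℚ) + 1 - 2 * i) * (2 * (ℓ : ℚ) + 1 - 4 * ((i : ℚ) + 1))) /
          ((2 * (ℓ : ℚ) + 1 - 2 * ((N : ℚ) + (i : ℚ) + 1)) *
            (2 * (ℓ : ℚ) + 1 - 4 * i))) *
      ((((N:ℚ)-(j:ℚ)) * (2*(ℓ:ℚ)+1 - ((N:ℚ)+(j:ℚ)) + ((N:ℚ)-(j:ℚ)))) /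
        (((N:ℚ)+(j:ℚ)) - ((N:ℚ)-(j:ℚ)) - (2*(ℓ:ℚ)+1)/2)) = 0 := by
  have d3 : (2 * (ℓ : ℚ) + 1 - 2 * ((N : ℚ) + (j : ℚ) + 1)) ≠ 0 := by
    intro h; exact odd_ne_even ℓ ((N:ℤ)+(j:ℤ)+1) (by push_cast; linarith)
  have d4 : (2 * (ℓ : ℚ) + 1 - 4 * (j:ℚ)) ≠ 0 := by
    intro h; exact odd_ne_even ℓ (2*(j:ℤ)) (by push_cast; linarith)
  have du2 : ((N:ℚ)+((j:ℚ)+1)) - ((N:ℚ)-((j:ℚ)+1)) - (2*(ℓ:ℚ)+1)/2 ≠ 0 := by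
    intro h; exact odd_ne_even ℓ (2*(j:ℤ)+2) (by push_cast; linarith)
  have dw2 : ((N:ℚ)+(j:ℚ)) - ((N:ℚ)-(j:ℚ)) - (2*(ℓ:ℚ)+1)/2 ≠ 0 := by
    intro h; exact odd_ne_even ℓ (2*(j:ℤ)) (by push_cast; linarith)
  have hch : ((N.choose (j+1) : ℚ)) * ((j:ℚ)+1) = (N.choose j : ℚ) * ((N:ℚ)-(j:ℚ)) := by
    have h2 : ((N.choose (j+1) * (j+1) : ℕ) : ℚ) = ((N.choose j * (N - j) : ℕ) : ℚ) := by
      exact_mod_cast congrArg (Nat.cast (R := ℚ)) (Nat.choose_succ_right_eq N j)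
    push_cast [Nat.cast_sub hj.le] at h2
    linarith
  rw [Finset.prod_range_succ, pow_succ]
  set p := ∏ i ∈ Finset.range j,
        ((2 * (ℓ : ℚ) + 1 - 2 * i) * (2 * (ℓ : ℚ) + 1 - 4 * ((i : ℚ) + 1))) /
          ((2 * (ℓ : ℚ) + 1 - 2 * ((N : ℚ) + (i : ℚ) + 1)) *
            (2 * (ℓ : ℚ) + 1 - 4 * i)) with hp
  set L : ℚ := 2*(ℓ:ℚ)+1 with hL
  set n : ℚ := (N:ℚ) with hn
  set x : ℚ := (j:ℚ) with hx
  have e1 : (-1 : ℚ)^j * (-1) * (N.choose (j+1) : ℚ) *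
      (p * ((L - 2*x) * (L - 4*(x+1)) / ((L - 2*(n+x+1)) * (L - 4*x)))) *
      (((n+(x+1)) - (n-(x+1))) * (L/2 - (n+(x+1))) / ((n+(x+1)) - (n-(x+1)) - L/2)) =
      ((-1:ℚ)^j * (-1) * (N.choose (j+1) : ℚ) * p * ((L - 2*x) * (L - 4*(x+1))) *
        (((n+(x+1)) - (n-(x+1))) * (L/2 - (n+(x+1))))) /
      ((L - 2*(n+x+1)) * (L - 4*x)) / ((n+(x+1)) - (n-(x+1)) - L/2) := by
    ring
  have e2 : (-1 : ℚ)^j * (N.choose j : ℚ) * p *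
      (((n-x) * (L - (n+x) + (n-x))) / ((n+x) - (n-x) - L/2)) =
      ((-1:ℚ)^j * (N.choose j : ℚ) * p * ((n-x) * (L - (n+x) + (n-x)))) /
      ((n+x) - (n-x) - L/2) := by
    ring
  rw [e1, e2, div_div, div_add_div _ _ (mul_ne_zero (mul_ne_zero d3 d4) du2) dw2,
    div_eq_zero_iff]
  left
  have hnum : ((j:ℚ)+1) *
      (((-1:ℚ)^j * (-1) * (N.choose (j+1) : ℚ) * p * ((L - 2*x) * (L - 4*(x+1))) *
          (((n+(x+1)) - (n-(x+1))) * (L/2 - (n+(x+1))))) * ((n+x) - (n-x) - L/2) +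
        ((L - 2*(n+x+1)) * (L - 4*x) * ((n+(x+1)) - (n-(x+1)) - L/2)) *
          ((-1:ℚ)^j * (N.choose j : ℚ) * p * ((n-x) * (L - (n+x) + (n-x))))) = 0 := by
    linear_combination ((-1:ℚ)^j * (-1) * p * ((L - 2*x) * (L - 4*(x+1))) *
      (((n+(x+1)) - (n-(x+1))) * (L/2 - (n+(x+1)))) * ((n+x) - (n-x) - L/2)) * hch
  have hj1 : ((j:ℚ)+1) ≠ 0 := by positivity
  exact (mul_eq_zero.mp hnum).resolve_left hj1

lemma ket_of_not_adm (ℓ : ℕ) (A : ℤ × ℤ) (h : ¬ Adm ℓ A) : ket ℓ A = 0 := by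
  rw [ket, dif_neg h]

lemma opY_ket (ℓ : ℕ) (A : ℤ × ℤ) (h : Adm ℓ A) :
    opY ℓ (ket ℓ A) =
      (((((A.2 : ℚ) - (A.1 : ℚ)) * ((2 * ℓ + 1) / 2 - (A.2 : ℚ)) /
            ((A.2 : ℚ) - (A.1 : ℚ) - (2 * ℓ + 1) / 2) : ℚ) : Fh) * hb) •
          ket ℓ (A.1, A.2 - 1) +
        (((((A.1 : ℚ) * (2 * ℓ + 1 - (A.2 : ℚ) + (A.1 : ℚ))) /
            ((A.2 : ℚ) - (A.1 : ℚ) - (2 * ℓ + 1) / 2) : ℚ) : Fh) * hb) •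
          ket ℓ (A.1 - 1, A.2) := by
  rw [ket, dif_pos h, opY, Finsupp.lsum_single, LinearMap.toSpanSingleton_apply, one_smul]

instance : CharZero Fh :=
  charZero_of_injective_algebraMap (algebraMap ℂ Fh).injective

lemma comb (a b c d : ℚ) (h : a*b + c*d = 0) :
    ((a : Fh) * ((b : Fh) * hb)) + ((c : Fh) * ((d : Fh) * hb)) = 0 := by
  have h2 : ((a*b + c*d : ℚ) : Fh) = 0 := by rw [h]; exact Rat.cast_zero
  rw [Rat.cast_add, Rat.cast_mul, Rat.cast_mul] at h2
  linear_combination hb * h2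


/-- for `0 ≤ N ≤ ℓ`, the vector
`v_N = ∑_{j=0}^N (-1)^j C(N,j) ∏_{i=0}^{j-1} ((2ℓ+1-2i)(2ℓ+1-4(i+1)))/((2ℓ+1-2(N+i+1))(2ℓ+1-4i)) |N-j, N+j⟩`
is annihilated by `Y`. -/
theorem stmt17 (ℓ : ℕ) (N : ℕ) (hN : N ≤ ℓ) :
    opY ℓ (∑ j ∈ Finset.range (N + 1),
      (((-1 : ℚ) ^ j * (N.choose j : ℚ) *
          ∏ i ∈ Finset.range j,
            ((2 * (ℓ : ℚ) + 1 - 2 * i) * (2 * (ℓ : ℚ) + 1 - 4 * ((i : ℚ) + 1))) /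
              ((2 * (ℓ : ℚ) + 1 - 2 * ((N : ℚ) + (i : ℚ) + 1)) *
                (2 * (ℓ : ℚ) + 1 - 4 * i)) : ℚ) : Fh) •
        ket ℓ ((N : ℤ) - (j : ℤ), (N : ℤ) + (j : ℤ))) = 0 := by
  have adm : ∀ j : ℕ, j ≤ N → Adm ℓ ((N : ℤ) - (j : ℤ), (N : ℤ) + (j : ℤ)) := by
    intro j hj
    exact ⟨by omega, by omega, by push_cast; omega⟩
  rw [map_sum]
  rw [Finset.sum_congr rfl (fun j hj => by
    rw [map_smul, opY_ket ℓ _ (adm j (Nat.lt_succ_iff.mp (Finset.mem_range.mp hj)))])]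
  simp only [smul_add, smul_smul]
  rw [Finset.sum_add_distrib, Finset.sum_range_succ', Finset.sum_range_succ]
  have h0 : ket ℓ ((N:ℤ) - ((0:ℕ):ℤ), (N:ℤ) + ((0:ℕ):ℤ) - 1) = 0 :=
    ket_of_not_adm _ _ (by rintro ⟨a, b, c⟩; omega)
  have hNz : ket ℓ ((N:ℤ) - ((N:ℕ):ℤ) - 1, (N:ℤ) + ((N:ℕ):ℤ)) = 0 :=
    ket_of_not_adm _ _ (by rintro ⟨a, b, c⟩; omega)
  rw [h0, hNz, smul_zero, smul_zero, add_zero, add_zero, ← Finset.sum_add_distrib]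
  refine Finset.sum_eq_zero fun k hk => ?_
  have hk' : k < N := Finset.mem_range.mp hk
  have kete : ((N:ℤ) - ((k+1:ℕ):ℤ), (N:ℤ) + ((k+1:ℕ):ℤ) - 1) =
      ((N:ℤ) - (k:ℤ) - 1, (N:ℤ) + (k:ℤ)) := by
    simp only [Prod.ext_iff]; constructor <;> push_cast <;> ring
  rw [kete, ← add_smul]
  exact smul_eq_zero_of_left (comb _ _ _ _ (by push_cast; linear_combination key_q ℓ N k hN hk')) _
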